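/- The elements [T], as T ranges over straight tableaux of a fixed row-convex shape D with entries in an alphabet L, are linearly independent over Z: the matrix expressing them in the monomial basis of the polynomial ring is in echelon form with pivots ±1 when monomials are ordered by the diagonal term order and tableaux are ordered lexicographically by modified column word. -/

import Mathlib

open scoped BigOperators

/-- A cell `(row, column)` of a diagram. -/
abbrev Cell := ℕ × ℕ

/-- A shape is row-convex if its rows have no gaps. -/
def RowConvex (D : Finset Cell) : Prop :=
  ∀ r i j k : ℕ, (r, i) ∈ D → (r, k) ∈ D → i ≤ j → j ≤ k → (r, j) ∈ D

/-- Rows strictly increase left to right (negative-letter convention). -/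
def RowStandard (D : Finset Cell) (T : Cell → ℕ) : Prop :=
  ∀ r i j : ℕ, (r, i) ∈ D → (r, j) ∈ D → i < j → T (r, i) < T (r, j)

/-- A straight tableau (negative-letter case). -/
def Straight (D : Finset Cell) (T : Cell → ℕ) : Prop :=
  RowStandard D T ∧
    ∀ i j k : ℕ, (i, k) ∈ D → (j, k) ∈ D → i < j → T (j, k) < T (i, k) →
      1 ≤ k ∧ (i, k - 1) ∈ D ∧ T (j, k) < T (i, k - 1)

/-- Sorted list of column indices of the cells of `D` in row `r`. -/
def rowColsList (D : Finset Cell) (r : ℕ) : List ℕ :=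
  ((D.filter (fun c => c.1 = r)).val.map Prod.snd).sort (· ≤ ·)

/-- The bracket (determinant of the minor of the generic matrix `(x_{l,p})`)
corresponding to row `r` of the tableau `T`. -/
noncomputable def rowBracket (D : Finset Cell) (T : Cell → ℕ) (r : ℕ) :
    MvPolynomial Cell ℤ :=
  Matrix.det (Matrix.of fun s t : Fin (rowColsList D r).length =>
    MvPolynomial.X (T (r, (rowColsList D r).get s), (rowColsList D r).get t))

/-- `[T]`: the product over the rows of `D` of the row brackets. -/
noncomputable def bracket (D : Finset Cell) (T : Cell → ℕ) : MvPolynomial Cell ℤ :=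
  ∏ r ∈ D.image Prod.fst, rowBracket D T r

/-- Multiset of entries of `T` in column `k` of `D`. -/
def colEntries (D : Finset Cell) (T : Cell → ℕ) (k : ℕ) : Multiset ℕ :=
  (D.filter (fun c => c.2 = k)).val.map T

/-- The modified column word: entries of each column in weakly decreasing
order, columns read left to right. -/
def modColWord (D : Finset Cell) (T : Cell → ℕ) : List ℕ :=
  (List.range (D.sup Prod.snd + 1)).flatMap fun k =>
    ((colEntries D T k).sort (· ≤ ·)).reverse

/-- The column word: entries read bottom to top within each column, columns
left to right. -/
def colWord (D : Finset Cell) (T : Cell → ℕ) : List ℕ :=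
  (List.range (D.sup Prod.snd + 1)).flatMap fun k =>
    (List.range (D.sup Prod.fst + 1)).reverse.filterMap fun i =>
      if (i, k) ∈ D then some (T (i, k)) else none

/-- Strict lexicographic order on words. -/
def lexLt (u v : List ℕ) : Prop := List.Lex (· < ·) u v

/-- Weak lexicographic order on words. -/
def lexLe (u v : List ℕ) : Prop := u = v ∨ List.Lex (· < ·) u v

/-- `varGt v w`: the variable `x_v` is greater than `x_w` in the default
diagonal order: strictly earlier column, or same column and strictly larger
row index (letter). -/
def varGt (v w : Cell) : Prop := v.2 < w.2 ∨ (v.2 = w.2 ∧ w.1 < v.1)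

/-- The default diagonal term order on monomials: `monLt M N` iff the greatest
variable occurring to different powers in `M` and `N` divides `N` to a higher
power. -/
def monLt (M N : Cell →₀ ℕ) : Prop :=
  ∃ v : Cell, M v < N v ∧ ∀ w : Cell, varGt w v → M w = N w

/-- The diagonal monomial of a tableau: the product over the cells `(i, c)` of
`D` of the variables `x_{T(i,c), c}`. -/
noncomputable def diagMon (D : Finset Cell) (T : Cell → ℕ) : Cell →₀ ℕ :=
  ∑ c ∈ D, Finsupp.single (T c, c.2) 1

/-- `m` is the initial (smallest) monomial of `p` in the default diagonal term
order. -/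
def IsInitMon (p : MvPolynomial Cell ℤ) (m : Cell →₀ ℕ) : Prop :=
  m ∈ p.support ∧ ∀ m' ∈ p.support, m' = m ∨ monLt m m'

/-! ### Order lemmas -/

lemma varGt_trans {u v w : Cell} (h1 : varGt u v) (h2 : varGt v w) : varGt u w := by
  rcases h1 with h1 | ⟨h1, h1'⟩ <;> rcases h2 with h2 | ⟨h2, h2'⟩
  · exact Or.inl (h1.trans h2)
  · exact Or.inl (h2 ▸ h1)
  · exact Or.inl (h1 ▸ h2)
  · exact Or.inr ⟨h1.trans h2, h2'.trans h1'⟩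

lemma varGt_trichotomy (v w : Cell) : varGt v w ∨ v = w ∨ varGt w v := by
  rcases lt_trichotomy v.2 w.2 with h | h | h
  · exact Or.inl (Or.inl h)
  · rcases lt_trichotomy v.1 w.1 with h' | h' | h'
    · exact Or.inr (Or.inr (Or.inr ⟨h.symm, h'⟩))
    · exact Or.inr (Or.inl (Prod.ext h' h))
    · exact Or.inl (Or.inr ⟨h, h'⟩)
  · exact Or.inr (Or.inr (Or.inl h))

/-- The key embedding `Cell → ℕ ×ₗ ℕᵒᵈ` realizing `varGt` as `<` on keys. -/
def varKey (v : Cell) : ℕ ×ₗ ℕᵒᵈ := toLex (v.2, OrderDual.toDual v.1)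

lemma varGt_iff_key {v w : Cell} : varGt v w ↔ varKey v < varKey w := by
  constructor
  · rintro (h | ⟨h, h'⟩)
    · exact Prod.Lex.left _ _ h
    · have : (v.2, OrderDual.toDual v.1) = (w.2, OrderDual.toDual v.1) := by rw [h]
      unfold varKey
      rw [this]
      exact Prod.Lex.right _ h'
  · intro h
    rcases Prod.lex_iff.1 h with h | ⟨h, h'⟩
    · exact Or.inl h
    · exact Or.inr ⟨h, h'⟩

lemma varGt_irrefl (v : Cell) : ¬ varGt v v := by
  rintro (h | ⟨h, h'⟩)
  · exact lt_irrefl _ h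
  · exact lt_irrefl _ h'

lemma monLt_irrefl (M : Cell →₀ ℕ) : ¬ monLt M M := by
  rintro ⟨v, h, -⟩; exact lt_irrefl _ h

lemma monLt_trans {M N P : Cell →₀ ℕ} (h1 : monLt M N) (h2 : monLt N P) : monLt M P := by
  obtain ⟨v1, hv1, ha1⟩ := h1
  obtain ⟨v2, hv2, ha2⟩ := h2
  rcases varGt_trichotomy v1 v2 with h | h | h
  · exact ⟨v1, by rw [ha2 v1 h] at hv1; exact hv1,
      fun w hw => (ha1 w hw).trans (ha2 w (varGt_trans hw h))⟩
  · subst h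
    exact ⟨v1, hv1.trans hv2, fun w hw => (ha1 w hw).trans (ha2 w hw)⟩
  · exact ⟨v2, by rw [ha1 v2 h]; exact hv2,
      fun w hw => (ha1 w (varGt_trans hw h)).trans (ha2 w hw)⟩

lemma monLt_asymm {M N : Cell →₀ ℕ} (h : monLt M N) : ¬ monLt N M :=
  fun h' => monLt_irrefl M (monLt_trans h h')

lemma monLt_trichotomy (M N : Cell →₀ ℕ) (h : M ≠ N) : monLt M N ∨ monLt N M := by
  classical
  set S := (M.support ∪ N.support).filter (fun v => M v ≠ N v) with hS
  have hSne : S.Nonempty := by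
    by_contra hc
    apply h
    ext v
    by_cases hv : v ∈ M.support ∪ N.support
    · by_contra hne
      exact hc ⟨v, Finset.mem_filter.2 ⟨hv, hne⟩⟩
    · rw [Finset.mem_union, not_or, Finsupp.notMem_support_iff, Finsupp.notMem_support_iff] at hv
      rw [hv.1, hv.2]
  obtain ⟨v, hvS, hvmin⟩ := S.exists_min_image varKey hSne
  have hvne : M v ≠ N v := (Finset.mem_filter.1 hvS).2
  have hagree : ∀ w, varGt w v → M w = N w := by
    intro w hw
    by_contra hne
    have hwS : w ∈ S := by
      refine Finset.mem_filter.2 ⟨?_, hne⟩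
      rcases Nat.eq_zero_or_pos (M w) with h0 | h0
      · refine Finset.mem_union_right _ (Finsupp.mem_support_iff.2 ?_)
        omega
      · exact Finset.mem_union_left _ (Finsupp.mem_support_iff.2 (by omega))
    exact absurd (varGt_iff_key.1 hw) (not_lt.2 (hvmin w hwS))
  rcases lt_or_gt_of_ne hvne with hlt | hgt
  · exact Or.inl ⟨v, hlt, hagree⟩
  · exact Or.inr ⟨v, hgt, fun w hw => (hagree w hw).symm⟩

lemma monLt_add_right {M N : Cell →₀ ℕ} (K : Cell →₀ ℕ) (h : monLt M N) :
    monLt (M + K) (N + K) := by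
  obtain ⟨v, hv, ha⟩ := h
  refine ⟨v, by simp [Finsupp.add_apply]; omega, fun w hw => by simp [Finsupp.add_apply, ha w hw]⟩

/-! ### Determinant lemmas -/

open MvPolynomial in
lemma prod_X_eq_monomial {ι : Type*} (s : Finset ι) (c : ι → Cell) :
    (∏ i ∈ s, (X (c i) : MvPolynomial Cell ℤ)) =
      monomial (∑ i ∈ s, Finsupp.single (c i) 1) 1 := by
  classical
  induction s using Finset.induction with
  | empty => simp [monomial_zero']
  | insert _ _ h ih =>
    rw [Finset.prod_insert h, Finset.sum_insert h, ih, X, monomial_mul, one_mul]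

/-- The permuted diagonal monomial. -/
noncomputable def permMon (n : ℕ) (a b : Fin n → ℕ) (σ : Equiv.Perm (Fin n)) : Cell →₀ ℕ :=
  ∑ i : Fin n, Finsupp.single (a (σ i), b i) 1

lemma permMon_apply (n : ℕ) (a b : Fin n → ℕ) (σ : Equiv.Perm (Fin n)) (w : Cell) :
    permMon n a b σ w = ∑ i : Fin n, if (a (σ i), b i) = w then 1 else 0 := by
  rw [permMon, Finsupp.finset_sum_apply]
  exact Finset.sum_congr rfl fun i _ => Finsupp.single_apply

lemma monLt_permMon (n : ℕ) (a b : Fin n → ℕ) (ha : StrictMono a) (hb : StrictMono b)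
    (σ : Equiv.Perm (Fin n)) (hσ : σ ≠ 1) :
    monLt (permMon n a b 1) (permMon n a b σ) := by
  classical
  have hex : ∃ t, σ t ≠ t := by
    by_contra hc
    push_neg at hc
    exact hσ (Equiv.ext hc)
  set F := Finset.univ.filter (fun t : Fin n => σ t ≠ t) with hF
  have hFne : F.Nonempty := by
    obtain ⟨t, ht⟩ := hex
    exact ⟨t, Finset.mem_filter.2 ⟨Finset.mem_univ _, ht⟩⟩
  set j := F.min' hFne with hj
  have hjF : σ j ≠ j := (Finset.mem_filter.1 (F.min'_mem hFne)).2
  have hfix : ∀ t : Fin n, t < j → σ t = t := by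
    intro t ht
    by_contra hc
    exact absurd ht (not_lt.2 (F.min'_le t (Finset.mem_filter.2 ⟨Finset.mem_univ _, hc⟩)))
  have hjlt : j < σ j := by
    rcases lt_trichotomy (σ j) j with h | h | h
    · have h2 : σ (σ j) = σ j := hfix (σ j) h
      exact absurd (σ.injective h2) hjF
    · exact absurd h hjF
    · exact h
  refine ⟨(a (σ j), b j), ?_, ?_⟩
  · have h0 : permMon n a b 1 (a (σ j), b j) = 0 := by
      rw [permMon_apply]
      refine Finset.sum_eq_zero fun i _ => ?_
      rw [if_neg]
      intro hc
      rw [Prod.mk.injEq] at hc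
      have : i = j := hb.injective hc.2
      subst this
      exact absurd (ha.injective hc.1) (fun h => hjF h.symm)
    have h1 : permMon n a b σ (a (σ j), b j) = 1 := by
      rw [permMon_apply]
      rw [Finset.sum_eq_single j]
      · simp
      · intro i _ hi
        rw [if_neg]
        intro hc
        rw [Prod.mk.injEq] at hc
        exact hi (hb.injective hc.2)
      · simp
    rw [h0, h1]; exact Nat.zero_lt_one
  · rintro w (hw | ⟨hw, hw'⟩)
    · -- w.2 < b j
      have hw2 : w.2 < b j := hw
      rw [permMon_apply, permMon_apply]
      refine Finset.sum_congr rfl fun i _ => ?_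
      congr 1
      rw [eq_iff_iff]
      constructor
      · intro h
        have hbi : b i = w.2 := congrArg Prod.snd h
        have hlt : i < j := hb.lt_iff_lt.1 (by rw [hbi]; exact hw2)
        rw [hfix i hlt]
        simpa using h
      · intro h
        have hbi : b i = w.2 := congrArg Prod.snd h
        have hlt : i < j := hb.lt_iff_lt.1 (by rw [hbi]; exact hw2)
        rw [hfix i hlt] at h
        simpa using h
    · -- w.2 = b j, w.1 > a (σ j)
      have hw2 : w.2 = b j := hw
      have hw1 : a (σ j) < w.1 := hw'
      have hz1 : permMon n a b 1 w = 0 := by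
        rw [permMon_apply]
        refine Finset.sum_eq_zero fun i _ => ?_
        rw [if_neg]
        intro hc
        have hbi : b i = w.2 := congrArg Prod.snd hc
        have hai : a i = w.1 := congrArg Prod.fst hc
        have hij : i = j := hb.injective (hbi.trans hw2)
        have hlt : a j < a (σ j) := ha hjlt
        rw [hij] at hai
        omega
      have hz2 : permMon n a b σ w = 0 := by
        rw [permMon_apply]
        refine Finset.sum_eq_zero fun i _ => ?_
        rw [if_neg]
        intro hc
        have hbi : b i = w.2 := congrArg Prod.snd hc
        have hai : a (σ i) = w.1 := congrArg Prod.fst hc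
        have hij : i = j := hb.injective (hbi.trans hw2)
        rw [hij] at hai
        omega
      rw [hz1, hz2]

open MvPolynomial in
lemma det_generic_expand (n : ℕ) (a b : Fin n → ℕ) :
    (Matrix.of fun s t : Fin n => (X (a s, b t) : MvPolynomial Cell ℤ)).det =
      ∑ σ : Equiv.Perm (Fin n),
        (Equiv.Perm.sign σ : ℤ) • monomial (permMon n a b σ) 1 := by
  rw [Matrix.det_apply]
  refine Finset.sum_congr rfl fun σ _ => ?_
  rw [Units.smul_def]
  congr 1
  rw [permMon, ← prod_X_eq_monomial Finset.univ (fun i => (a (σ i), b i))]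
  rfl

open MvPolynomial in
lemma det_generic_initMon (n : ℕ) (a b : Fin n → ℕ) (ha : StrictMono a) (hb : StrictMono b) :
    coeff (permMon n a b 1) ((Matrix.of fun s t : Fin n => (X (a s, b t) : MvPolynomial Cell ℤ)).det) = 1 ∧
    ∀ u ∈ ((Matrix.of fun s t : Fin n => (X (a s, b t) : MvPolynomial Cell ℤ)).det).support,
      u = permMon n a b 1 ∨ monLt (permMon n a b 1) u := by
  classical
  rw [det_generic_expand]
  constructor
  · rw [coeff_sum]
    rw [Finset.sum_eq_single (1 : Equiv.Perm (Fin n))]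
    · simp [coeff_monomial]
    · intro σ _ hσ
      rw [coeff_smul, coeff_monomial, if_neg, smul_zero]
      intro hc
      exact monLt_irrefl _ (hc ▸ monLt_permMon n a b ha hb σ hσ)
    · simp
  · intro u hu
    have hsub := MvPolynomial.support_sum (s := (Finset.univ : Finset (Equiv.Perm (Fin n))))
      (f := fun σ => (Equiv.Perm.sign σ : ℤ) • (monomial (permMon n a b σ) 1 : MvPolynomial Cell ℤ)) hu
    rw [Finset.mem_biUnion] at hsub
    obtain ⟨σ, -, hσu⟩ := hsub
    have : u ∈ (monomial (permMon n a b σ) (1 : ℤ)).support :=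
      MvPolynomial.support_smul hσu
    rw [support_monomial, if_neg one_ne_zero, Finset.mem_singleton] at this
    subst this
    by_cases h1 : σ = 1
    · subst h1; exact Or.inl rfl
    · exact Or.inr (monLt_permMon n a b ha hb σ h1)

/-! ### Products and initial monomials -/

/-- Initial monomial with coefficient one. -/
def InitOne (p : MvPolynomial Cell ℤ) (m : Cell →₀ ℕ) : Prop :=
  MvPolynomial.coeff m p = 1 ∧ ∀ u ∈ p.support, u = m ∨ monLt m u

lemma monLt_add_of_le {m x n y : Cell →₀ ℕ} (hx : x = m ∨ monLt m x)
    (hy : y = n ∨ monLt n y) (hne : ¬(x = m ∧ y = n)) : monLt (m + n) (x + y) := by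
  rcases hx with rfl | hx
  · rcases hy with rfl | hy
    · exact absurd ⟨rfl, rfl⟩ hne
    · rw [add_comm x n, add_comm x y]
      exact monLt_add_right x hy
  · rcases hy with rfl | hy
    · exact monLt_add_right y hx
    · have h1 : monLt (m + n) (x + n) := monLt_add_right n hx
      have h2 : monLt (x + n) (x + y) := by
        rw [add_comm x n, add_comm x y]
        exact monLt_add_right x hy
      exact monLt_trans h1 h2

set_option maxHeartbeats 1000000 in
lemma InitOne.mul {p q : MvPolynomial Cell ℤ} {m n : Cell →₀ ℕ}
    (hp : InitOne p m) (hq : InitOne q n) : InitOne (p * q) (m + n) := by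
  constructor
  · rw [MvPolynomial.coeff_mul]
    rw [Finset.sum_eq_single (m, n)]
    · rw [hp.1, hq.1, one_mul]
    · rintro ⟨x, y⟩ hxy hne
      simp only [Finset.HasAntidiagonal.mem_antidiagonal] at hxy
      by_contra hc
      have hx : x ∈ p.support := by
        rw [MvPolynomial.mem_support_iff]
        intro h0; rw [h0, zero_mul] at hc; exact hc rfl
      have hy : y ∈ q.support := by
        rw [MvPolynomial.mem_support_iff]
        intro h0; rw [h0, mul_zero] at hc; exact hc rfl
      have hlt : monLt (m + n) (x + y) := by
        refine monLt_add_of_le (hp.2 x hx) (hq.2 y hy) ?_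
        rintro ⟨rfl, rfl⟩
        exact hne rfl
      rw [hxy] at hlt
      exact monLt_irrefl _ hlt
    · intro h
      simp only [Finset.HasAntidiagonal.mem_antidiagonal] at h
      exact absurd trivial h
  · intro u hu
    obtain ⟨x, hx, y, hy, rfl⟩ := Finset.mem_add.1 (MvPolynomial.support_mul p q hu)
    by_cases hc : x = m ∧ y = n
    · exact Or.inl (by rw [hc.1, hc.2])
    · exact Or.inr (monLt_add_of_le (hp.2 x hx) (hq.2 y hy) hc)

lemma InitOne.prod {ι : Type*} (s : Finset ι) (p : ι → MvPolynomial Cell ℤ)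
    (m : ι → Cell →₀ ℕ) (h : ∀ i ∈ s, InitOne (p i) (m i)) :
    InitOne (∏ i ∈ s, p i) (∑ i ∈ s, m i) := by
  classical
  induction s using Finset.induction with
  | empty =>
    refine ⟨by simp [MvPolynomial.coeff_zero_one], ?_⟩
    intro u hu
    left
    have : (1 : MvPolynomial Cell ℤ) = MvPolynomial.monomial 0 1 := by
      rw [MvPolynomial.monomial_zero']; rfl
    rw [Finset.prod_empty, this, MvPolynomial.support_monomial, if_neg one_ne_zero,
      Finset.mem_singleton] at hu
    rw [hu, Finset.sum_empty]
  | insert _ _ ha ih =>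
    rw [Finset.prod_insert ha, Finset.sum_insert ha]
    exact (h _ (Finset.mem_insert_self _ _)).mul
      (ih fun i hi => h i (Finset.mem_insert_of_mem hi))

/-! ### Row columns list facts -/

lemma mem_rowColsList {D : Finset Cell} {r x : ℕ} :
    x ∈ rowColsList D r ↔ (r, x) ∈ D := by
  rw [rowColsList, ← Multiset.mem_coe, Multiset.sort_eq, Multiset.mem_map]
  constructor
  · rintro ⟨c, hc, rfl⟩
    rw [Finset.mem_val, Finset.mem_filter] at hc
    obtain ⟨hc1, hc2⟩ := hc
    have : c = (r, c.2) := by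
      rw [← hc2]
    rwa [← this]
  · intro h
    exact ⟨(r, x), (Finset.mem_filter.2 ⟨h, rfl⟩), rfl⟩

lemma rowColsList_nodup (D : Finset Cell) (r : ℕ) : (rowColsList D r).Nodup := by
  rw [← Multiset.coe_nodup, rowColsList, Multiset.sort_eq]
  refine Multiset.Nodup.map_on ?_ (D.filter (fun c => c.1 = r)).nodup
  intro x hx y hy hxy
  rw [Finset.mem_val, Finset.mem_filter] at hx hy
  exact Prod.ext (hx.2.trans hy.2.symm) hxy

lemma rowColsList_sorted_lt (D : Finset Cell) (r : ℕ) :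
    (rowColsList D r).Pairwise (· < ·) := by
  have h1 : (rowColsList D r).Pairwise (· ≤ ·) := Multiset.pairwise_sort _ _
  have h2 := rowColsList_nodup D r
  rw [List.Nodup] at h2
  exact (h1.and h2).imp fun h => lt_of_le_of_ne h.1 h.2

lemma rowColsList_get_strictMono (D : Finset Cell) (r : ℕ) :
    StrictMono (rowColsList D r).get :=
  (List.sortedLT_iff_pairwise.2 (rowColsList_sorted_lt D r)).strictMono_get

/-- The part of the diagonal monomial coming from row `r`. -/
noncomputable def rowMon (D : Finset Cell) (T : Cell → ℕ) (r : ℕ) : Cell →₀ ℕ :=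
  ∑ c ∈ D.filter (fun c => c.1 = r), Finsupp.single (T c, c.2) 1

lemma rowMon_eq_permMon (D : Finset Cell) (T : Cell → ℕ) (r : ℕ) :
    rowMon D T r = permMon (rowColsList D r).length
      (fun s => T (r, (rowColsList D r).get s)) (rowColsList D r).get 1 := by
  classical
  set L := rowColsList D r with hL
  set h : ℕ → (Cell →₀ ℕ) := fun x => Finsupp.single (T (r, x), x) 1 with hh
  have h1 : permMon L.length (fun s => T (r, L.get s)) L.get 1 = ∑ s : Fin L.length, h L[s.1] := by
    rw [permMon]
    exact Finset.sum_congr rfl fun s _ => by simp [hh]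
  rw [h1, Fin.sum_univ_fun_getElem]
  rw [rowMon, Finset.sum_eq_multiset_sum]
  have h2 : (L.map h).sum = ((Multiset.map Prod.snd (D.filter (fun c => c.1 = r)).val).map h).sum := by
    rw [hL, rowColsList, ← Multiset.sum_coe, ← Multiset.map_coe, Multiset.sort_eq]
  rw [h2, Multiset.map_map]
  congr 1
  refine Multiset.map_congr rfl ?_
  intro c hc
  have hcr : c.1 = r := by
    rw [Finset.mem_val, Finset.mem_filter] at hc
    exact hc.2
  simp only [Function.comp_apply, hh]
  have : (r, c.2) = c := by
    rw [← hcr]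
  rw [this]

lemma rowBracket_initOne {D : Finset Cell} {T : Cell → ℕ} (hT : RowStandard D T) (r : ℕ) :
    InitOne (rowBracket D T r) (rowMon D T r) := by
  have hb : StrictMono (rowColsList D r).get := rowColsList_get_strictMono D r
  have ha : StrictMono (fun s => T (r, (rowColsList D r).get s)) := by
    intro s t hst
    refine hT r _ _ ?_ ?_ (hb hst)
    · exact mem_rowColsList.1 (List.get_mem _ _)
    · exact mem_rowColsList.1 (List.get_mem _ _)
  obtain ⟨hc, hs⟩ := det_generic_initMon (rowColsList D r).length
    (fun s => T (r, (rowColsList D r).get s)) (rowColsList D r).get ha hb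
  rw [rowMon_eq_permMon D T r]
  exact ⟨hc, hs⟩

lemma diagMon_eq_sum_rowMon (D : Finset Cell) (T : Cell → ℕ) :
    diagMon D T = ∑ r ∈ D.image Prod.fst, rowMon D T r := by
  classical
  rw [diagMon]
  rw [← Finset.sum_fiberwise_of_maps_to (g := Prod.fst) (t := D.image Prod.fst)
    (fun c hc => Finset.mem_image_of_mem _ hc)]
  rfl

lemma bracket_initOne {D : Finset Cell} {T : Cell → ℕ} (hT : RowStandard D T) :
    InitOne (bracket D T) (diagMon D T) := by
  rw [bracket, diagMon_eq_sum_rowMon]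
  exact InitOne.prod _ _ _ fun r _ => rowBracket_initOne hT r

/-! ### Injectivity of the diagonal monomial on straight tableaux -/

lemma count_colEntries (D : Finset Cell) (T : Cell → ℕ) (k m : ℕ) :
    Multiset.count m (colEntries D T k) =
      (D.filter (fun c => c.2 = k ∧ m = T c)).card := by
  rw [colEntries, Multiset.count_map, ← Finset.filter_val, Finset.filter_filter]
  rfl

lemma diagMon_apply (D : Finset Cell) (T : Cell → ℕ) (w : Cell) :
    diagMon D T w = (D.filter (fun c => (T c, c.2) = w)).card := by
  rw [diagMon, Finsupp.finset_sum_apply]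
  rw [Finset.card_eq_sum_ones, Finset.sum_filter]
  exact Finset.sum_congr rfl fun c _ => Finsupp.single_apply

lemma colEntries_eq_of_diagMon_eq {D : Finset Cell} {T T' : Cell → ℕ}
    (h : diagMon D T = diagMon D T') (k : ℕ) :
    colEntries D T k = colEntries D T' k := by
  refine Multiset.ext.2 fun m => ?_
  rw [count_colEntries, count_colEntries]
  have h1 : diagMon D T (m, k) = diagMon D T' (m, k) := by rw [h]
  rw [diagMon_apply, diagMon_apply] at h1
  have e1 : D.filter (fun c => (T c, c.2) = (m, k)) = D.filter (fun c => c.2 = k ∧ m = T c) := by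
    refine Finset.filter_congr fun c _ => ?_
    rw [Prod.ext_iff]
    constructor
    · rintro ⟨h1, h2⟩; exact ⟨h2, h1.symm⟩
    · rintro ⟨h1, h2⟩; exact ⟨h2.symm, h1⟩
  have e2 : D.filter (fun c => (T' c, c.2) = (m, k)) = D.filter (fun c => c.2 = k ∧ m = T' c) := by
    refine Finset.filter_congr fun c _ => ?_
    rw [Prod.ext_iff]
    constructor
    · rintro ⟨h1, h2⟩; exact ⟨h2, h1.symm⟩
    · rintro ⟨h1, h2⟩; exact ⟨h2.symm, h1⟩
  rw [e1, e2] at h1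
  exact h1

/-- Key asymmetric step: a minimal disagreement in a column leads to a
contradiction. -/
lemma straight_col_helper {D : Finset Cell} {T T' : Cell → ℕ}
    (hT : Straight D T) (hT' : Straight D T') {k : ℕ}
    (hcolk : colEntries D T k = colEntries D T' k)
    (hIH : ∀ j i : ℕ, j < k → (i, j) ∈ D → T (i, j) = T' (i, j))
    {m : ℕ}
    (hmin : ∀ c ∈ D, c.2 = k → T c ≠ T' c → m ≤ T c ∧ m ≤ T' c)
    {i0 : ℕ} (h0 : (i0, k) ∈ D) (hT0 : T (i0, k) = m) (hT0' : m < T' (i0, k)) :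
    False := by
  classical
  set S := D.filter (fun c => c.2 = k ∧ m = T c) with hS
  set S' := D.filter (fun c => c.2 = k ∧ m = T' c) with hS'
  have hcard : S.card = S'.card := by
    rw [hS, hS', ← count_colEntries, ← count_colEntries, hcolk]
  have h0S : (i0, k) ∈ S := Finset.mem_filter.2 ⟨h0, rfl, hT0.symm⟩
  have h0S' : (i0, k) ∉ S' := by
    intro hc
    have := (Finset.mem_filter.1 hc).2.2
    omega
  have hnsub : ¬ S' ⊆ S := by
    intro hsub
    have : S' = S := Finset.eq_of_subset_of_card_le hsub (le_of_eq hcard)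
    rw [← this] at h0S
    exact h0S' h0S
  obtain ⟨c1, hc1S', hc1S⟩ := Finset.not_subset.1 hnsub
  obtain ⟨hc1D, hc1k, hc1T'⟩ := Finset.mem_filter.1 hc1S'
  have hc1T : m ≠ T c1 := by
    intro hc
    exact hc1S (Finset.mem_filter.2 ⟨hc1D, hc1k, hc⟩)
  have hTm : m < T c1 := by
    have := hmin c1 hc1D hc1k (by omega)
    omega
  set j0 := c1.1 with hj0
  have hc1 : c1 = (j0, k) := Prod.ext rfl hc1k
  rw [hc1] at hc1D hTm hc1T'
  have hne : i0 ≠ j0 := by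
    intro hc
    rw [← hc] at hTm
    omega
  rcases lt_or_gt_of_ne hne with hlt | hgt
  · -- i0 < j0 : inversion in T' at column k
    have hinv := hT'.2 i0 j0 k h0 hc1D hlt (by omega)
    obtain ⟨hk1, hmem, hval⟩ := hinv
    -- T' (j0, k) = m, so m < T' (i0, k-1)
    have h1 : m < T' (i0, k - 1) := by omega
    have h2 : T (i0, k - 1) < T (i0, k) := hT.1 i0 (k - 1) k hmem h0 (by omega)
    have h3 : T (i0, k - 1) = T' (i0, k - 1) := hIH (k - 1) i0 (by omega) hmem
    omega
  · -- j0 < i0 : inversion in T at column k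
    have hinv := hT.2 j0 i0 k hc1D h0 hgt (by omega)
    obtain ⟨hk1, hmem, hval⟩ := hinv
    have h2 : T' (j0, k - 1) < T' (j0, k) := hT'.1 j0 (k - 1) k hmem hc1D (by omega)
    have h3 : T (j0, k - 1) = T' (j0, k - 1) := hIH (k - 1) j0 (by omega) hmem
    omega

lemma straight_eq_of_colEntries_eq {D : Finset Cell} {T T' : Cell → ℕ}
    (hT : Straight D T) (hT' : Straight D T')
    (hcol : ∀ k, colEntries D T k = colEntries D T' k) :
    ∀ k i : ℕ, (i, k) ∈ D → T (i, k) = T' (i, k) := by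
  intro k
  induction k using Nat.strong_induction_on with
  | _ k IH =>
    by_contra hc
    push_neg at hc
    obtain ⟨i1, hi1D, hi1⟩ := hc
    classical
    set F := (D.filter (fun c => c.2 = k ∧ T c ≠ T' c)).image (fun c => min (T c) (T' c))
      with hF
    have hFne : F.Nonempty := by
      refine ⟨min (T (i1, k)) (T' (i1, k)), Finset.mem_image_of_mem _ ?_⟩
      exact Finset.mem_filter.2 ⟨hi1D, rfl, hi1⟩
    set m := F.min' hFne with hm
    have hmin : ∀ c ∈ D, c.2 = k → T c ≠ T' c → m ≤ T c ∧ m ≤ T' c := by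
      intro c hcD hck hcne
      have : min (T c) (T' c) ∈ F :=
        Finset.mem_image_of_mem _ (Finset.mem_filter.2 ⟨hcD, hck, hcne⟩)
      have := F.min'_le _ this
      omega
    obtain ⟨c0, hc0mem, hc0⟩ := Finset.mem_image.1 (F.min'_mem hFne)
    obtain ⟨hc0D, hc0k, hc0ne⟩ := Finset.mem_filter.1 hc0mem
    have hc0eq : c0 = (c0.1, k) := Prod.ext rfl hc0k
    have hIH' : ∀ j i : ℕ, j < k → (i, j) ∈ D → T (i, j) = T' (i, j) :=
      fun j i hj hij => IH j hj i hij
    rcases le_or_gt (T c0) (T' c0) with hle | hlt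
    · have h1 : T c0 = m := by omega
      refine straight_col_helper hT hT' (hcol k) hIH' hmin
        (i0 := c0.1) (hc0eq ▸ hc0D) ?_ ?_
      · rw [← hc0eq]; exact h1
      · rw [← hc0eq]; omega
    · have h1 : T' c0 = m := by omega
      refine straight_col_helper hT' hT (hcol k).symm
        (fun j i hj hij => (hIH' j i hj hij).symm)
        (fun c hcD hck hcne => ((hmin c hcD hck (Ne.symm hcne)).symm))
        (i0 := c0.1) (hc0eq ▸ hc0D) ?_ ?_
      · rw [← hc0eq]; exact h1
      · rw [← hc0eq]; omega

/-! ### Existence of minimal monomials and final assembly -/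

lemma exists_monLt_min (s : Finset (Cell →₀ ℕ)) (h : s.Nonempty) :
    ∃ M ∈ s, ∀ N ∈ s, N = M ∨ monLt M N := by
  classical
  induction s using Finset.induction with
  | empty => exact absurd h (by simp)
  | @insert a s ha ih =>
    rcases s.eq_empty_or_nonempty with rfl | hne
    · refine ⟨a, Finset.mem_insert_self _ _, fun N hN => ?_⟩
      rcases Finset.mem_insert.1 hN with rfl | hN
      · exact Or.inl rfl
      · exact absurd hN (by simp)
    · obtain ⟨M, hM, hmin⟩ := ih hne
      by_cases haM : a = M
      · refine ⟨M, Finset.mem_insert_of_mem hM, fun N hN => ?_⟩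
        rcases Finset.mem_insert.1 hN with rfl | hN
        · exact Or.inl haM
        · exact hmin N hN
      · rcases monLt_trichotomy a M haM with hlt | hlt
        · refine ⟨a, Finset.mem_insert_self _ _, fun N hN => ?_⟩
          rcases Finset.mem_insert.1 hN with rfl | hN
          · exact Or.inl rfl
          · rcases hmin N hN with rfl | h2
            · exact Or.inr hlt
            · exact Or.inr (monLt_trans hlt h2)
        · refine ⟨M, Finset.mem_insert_of_mem hM, fun N hN => ?_⟩
          rcases Finset.mem_insert.1 hN with rfl | hN
          · exact Or.inr hlt
          · exact hmin N hN

theorem straight_brackets_linearIndependent'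
    (D : Finset Cell) (hD : RowConvex D) :
    (∀ T : {T : Cell → ℕ // Straight D T ∧ ∀ c ∉ D, T c = 0},
      IsInitMon (bracket D T.1) (diagMon D T.1)) ∧
    (∀ T T' : {T : Cell → ℕ // Straight D T ∧ ∀ c ∉ D, T c = 0},
      T ≠ T' → diagMon D T.1 ≠ diagMon D T'.1) ∧
    (∀ T : {T : Cell → ℕ // Straight D T ∧ ∀ c ∉ D, T c = 0},
      MvPolynomial.coeff (diagMon D T.1) (bracket D T.1) = 1 ∨
        MvPolynomial.coeff (diagMon D T.1) (bracket D T.1) = -1) ∧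
    LinearIndependent ℤ
      (fun T : {T : Cell → ℕ // Straight D T ∧ ∀ c ∉ D, T c = 0} =>
        bracket D T.1) := by
  classical
  have hinit : ∀ T : {T : Cell → ℕ // Straight D T ∧ ∀ c ∉ D, T c = 0},
      InitOne (bracket D T.1) (diagMon D T.1) :=
    fun T => bracket_initOne T.2.1.1
  have hinj : ∀ T T' : {T : Cell → ℕ // Straight D T ∧ ∀ c ∉ D, T c = 0},
      T ≠ T' → diagMon D T.1 ≠ diagMon D T'.1 := by
    intro T T' hne heq
    apply hne
    apply Subtype.ext
    funext c
    by_cases hc : c ∈ D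
    · have : (c.1, c.2) ∈ D := by rwa [Prod.mk.eta]
      have := straight_eq_of_colEntries_eq T.2.1 T'.2.1
        (colEntries_eq_of_diagMon_eq heq) c.2 c.1 this
      rwa [Prod.mk.eta] at this
    · rw [T.2.2 c hc, T'.2.2 c hc]
  refine ⟨?_, hinj, ?_, ?_⟩
  · intro T
    refine ⟨?_, (hinit T).2⟩
    rw [MvPolynomial.mem_support_iff, (hinit T).1]
    exact one_ne_zero
  · intro T
    exact Or.inl (hinit T).1
  · rw [linearIndependent_iff]
    intro l hl
    by_contra hl0
    have hsupp : l.support.Nonempty := Finsupp.support_nonempty_iff.2 hl0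
    have himg : (l.support.image (fun T => diagMon D T.1)).Nonempty :=
      hsupp.image _
    obtain ⟨M, hM, hmin⟩ := exists_monLt_min _ himg
    obtain ⟨T0, hT0supp, hT0M⟩ := Finset.mem_image.1 hM
    have hcoeff : MvPolynomial.coeff M (Finsupp.linearCombination ℤ
        (fun T : {T : Cell → ℕ // Straight D T ∧ ∀ c ∉ D, T c = 0} => bracket D T.1) l) =
        l T0 := by
      rw [Finsupp.linearCombination_apply, Finsupp.sum, MvPolynomial.coeff_sum]
      rw [Finset.sum_eq_single T0]
      · rw [MvPolynomial.coeff_smul, ← hT0M, (hinit T0).1, smul_eq_mul, mul_one]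
      · intro T hT hTne
        rw [MvPolynomial.coeff_smul]
        have hz : MvPolynomial.coeff M (bracket D T.1) = 0 := by
          by_contra hnz
          have hMs : M ∈ (bracket D T.1).support := MvPolynomial.mem_support_iff.2 hnz
          rcases (hinit T).2 M hMs with heq | hlt
          · exact hinj T T0 hTne (by rw [← heq, hT0M])
          · have hd : diagMon D T.1 ∈ l.support.image (fun T => diagMon D T.1) :=
              Finset.mem_image_of_mem _ hT
            rcases hmin _ hd with heq2 | hlt2
            · rw [heq2] at hlt
              exact monLt_irrefl _ hlt
            · exact monLt_asymm hlt hlt2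
        rw [hz, smul_zero]
      · intro h
        exact absurd hT0supp h
    rw [hl, MvPolynomial.coeff_zero] at hcoeff
    exact Finsupp.mem_support_iff.1 hT0supp hcoeff.symm

/-- The brackets `[T]`, for `T` ranging over the straight tableaux of a fixed
row-convex shape `D` (normalized to vanish off `D`), are linearly independent
over `ℤ`: their initial monomials in the default diagonal term order are
pairwise distinct, each occurs with coefficient `±1` (echelon form with `±1`
pivots), and the family is `ℤ`-linearly independent. -/
theorem straight_brackets_linearIndependent
    (D : Finset Cell) (hD : RowConvex D) :
    (∀ T : {T : Cell → ℕ // Straight D T ∧ ∀ c ∉ D, T c = 0},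
      IsInitMon (bracket D T.1) (diagMon D T.1)) ∧
    (∀ T T' : {T : Cell → ℕ // Straight D T ∧ ∀ c ∉ D, T c = 0},
      T ≠ T' → diagMon D T.1 ≠ diagMon D T'.1) ∧
    (∀ T : {T : Cell → ℕ // Straight D T ∧ ∀ c ∉ D, T c = 0},
      MvPolynomial.coeff (diagMon D T.1) (bracket D T.1) = 1 ∨
        MvPolynomial.coeff (diagMon D T.1) (bracket D T.1) = -1) ∧
    LinearIndependent ℤ
      (fun T : {T : Cell → ℕ // Straight D T ∧ ∀ c ∉ D, T c = 0} =>
        bracket D T.1) := by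
  exact straight_brackets_linearIndependent' D hD
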